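/- arXiv:1206.6748 — 5 statements merged into one kernel-verified Lean document; each statement's English description precedes it below -/
import Mathlib

section
/- Let b < 0, let h : [0,∞) → ℝ be continuous with h(r) ≤ (1/2)(√(-b)·coth(√(-b)·r) − √(-b)) for all r > 0, and define W(t) = sinh(√(-b)t)/(√(-b)·e^{2∫₀ᵗ h(s)ds}). Then the isoperimetric quotient q_W(t) = (∫₀ᵗ W(s)ds)/W(t) satisfies q_W(t) ≤ 1/√(-b) for all t > 0. -/
theorem stmt_3 (b : ℝ) (hb : b < 0) (h : ℝ → ℝ)
    (hcont : ContinuousOn h (Set.Ici 0))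
    (hbal : ∀ r > 0, h r ≤ (1 / 2) *
      (Real.sqrt (-b) * (Real.cosh (Real.sqrt (-b) * r) / Real.sinh (Real.sqrt (-b) * r))
        - Real.sqrt (-b)))
    (W : ℝ → ℝ)
    (hW : ∀ t, W t = Real.sinh (Real.sqrt (-b) * t) /
      (Real.sqrt (-b) * Real.exp (2 * ∫ s in (0:ℝ)..t, h s))) :
    ∀ t > 0, (∫ s in (0:ℝ)..t, W s) / W t ≤ 1 / Real.sqrt (-b) := by
  intro t ht
  set a := Real.sqrt (-b) with ha_def
  have ha : 0 < a := Real.sqrt_pos.2 (by linarith)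
  -- continuous extension of h to all of ℝ
  set g : ℝ → ℝ := fun s => h (max s 0) with hg_def
  have hgc : Continuous g :=
    hcont.comp_continuous (continuous_id.max continuous_const) fun x => le_max_right x 0
  set H : ℝ → ℝ := fun u => ∫ s in (0:ℝ)..u, g s with hH_def
  have hHd : ∀ u, HasDerivAt H (g u) u := fun u =>
    (hgc.integral_hasStrictDerivAt 0 u).hasDerivAt
  have hHc : Continuous H := continuous_iff_continuousAt.2 fun u => (hHd u).continuousAt
  set Wg : ℝ → ℝ := fun u => Real.sinh (a * u) * Real.exp (-(2 * H u)) / a with hWg_def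
  have hWgc : Continuous Wg :=
    (((Real.continuous_sinh.comp (continuous_const.mul continuous_id)).mul
      (Real.continuous_exp.comp (continuous_const.mul hHc).neg)).div_const a)
  have hWeq : ∀ u, 0 ≤ u → W u = Wg u := by
    intro u hu
    have hint : (∫ s in (0:ℝ)..u, h s) = H u := by
      refine intervalIntegral.integral_congr fun s hs => ?_
      rw [Set.uIcc_of_le hu] at hs
      simp [hg_def, max_eq_left hs.1]
    rw [hW u, hint]
    show _ = Real.sinh (a * u) * Real.exp (-(2 * H u)) / a
    rw [Real.exp_neg]
    field_simp
  have hWd : ∀ u, HasDerivAt Wg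
      ((Real.cosh (a * u) * a * Real.exp (-(2 * H u)) +
        Real.sinh (a * u) * (Real.exp (-(2 * H u)) * (-(2 * g u)))) / a) u := by
    intro u
    have h1 : HasDerivAt (fun x => Real.sinh (a * x)) (Real.cosh (a * u) * a) u := by
      have := (Real.hasDerivAt_sinh (a * u)).comp u ((hasDerivAt_id u).const_mul a)
      simp only [mul_one] at this
      exact this
    have h2 : HasDerivAt (fun x => Real.exp (-(2 * H x)))
        (Real.exp (-(2 * H u)) * (-(2 * g u))) u := (((hHd u).const_mul 2).neg).exp
    exact (h1.mul h2).div_const a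
  -- the comparison function
  set φ : ℝ → ℝ := fun u => Wg u / a - ∫ s in (0:ℝ)..u, Wg s with hφ_def
  have hφd : ∀ u, HasDerivAt φ
      ((Real.cosh (a * u) * a * Real.exp (-(2 * H u)) +
        Real.sinh (a * u) * (Real.exp (-(2 * H u)) * (-(2 * g u)))) / a / a - Wg u) u := by
    intro u
    exact ((hWd u).div_const a).sub (hWgc.integral_hasStrictDerivAt 0 u).hasDerivAt
  have hderiv_nonneg : ∀ u, 0 < u →
      0 ≤ (Real.cosh (a * u) * a * Real.exp (-(2 * H u)) +
        Real.sinh (a * u) * (Real.exp (-(2 * H u)) * (-(2 * g u)))) / a / a - Wg u := by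
    intro u hu
    set S := Real.sinh (a * u) with hS_def
    set C := Real.cosh (a * u) with hC_def
    set E := Real.exp (-(2 * H u)) with hE_def
    have hS : 0 < S := Real.sinh_pos_iff.2 (mul_pos ha hu)
    have hE : 0 < E := Real.exp_pos _
    have hgu : g u = h u := by simp [hg_def, max_eq_left hu.le]
    have hkey : 2 * g u * S ≤ a * C - a * S := by
      have h1 := mul_le_mul_of_nonneg_right (hbal u hu) (le_of_lt (by positivity : (0:ℝ) < 2 * S))
      have h2 : (1 / 2) * (a * (C / S) - a) * (2 * S) = a * C - a * S := by
        field_simp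
      rw [h2] at h1
      rw [hgu]
      linarith
    have heq : (C * a * E + S * (E * (-(2 * g u)))) / a / a - S * E / a
        = E * (a * C - 2 * g u * S - a * S) / (a * a) := by
      field_simp
      ring
    show 0 ≤ (C * a * E + S * (E * (-(2 * g u)))) / a / a - S * E / a
    rw [heq]
    apply div_nonneg _ (by positivity)
    exact mul_nonneg hE.le (by linarith)
  have hmono : MonotoneOn φ (Set.Ici 0) := by
    apply monotoneOn_of_deriv_nonneg (convex_Ici 0)
    · exact (Continuous.continuousOn (by
        exact (hWgc.div_const a).sub
          (continuous_iff_continuousAt.2 fun u =>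
            (hWgc.integral_hasStrictDerivAt 0 u).hasDerivAt.continuousAt)))
    · intro u hu
      exact (hφd u).differentiableAt.differentiableWithinAt
    · intro u hu
      rw [interior_Ici] at hu
      rw [(hφd u).deriv]
      exact hderiv_nonneg u hu
  have hφ0 : φ 0 = 0 := by
    simp [hφ_def, hWg_def, intervalIntegral.integral_same]
  have hineq : (∫ s in (0:ℝ)..t, Wg s) ≤ Wg t / a := by
    have := hmono (Set.self_mem_Ici) (Set.mem_Ici.2 ht.le) ht.le
    rw [hφ0] at this
    simp only [hφ_def] at this
    linarith
  have hintW : (∫ s in (0:ℝ)..t, W s) = ∫ s in (0:ℝ)..t, Wg s := by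
    refine intervalIntegral.integral_congr fun s hs => ?_
    rw [Set.uIcc_of_le ht.le] at hs
    exact hWeq s hs.1
  have hWt : 0 < W t := by
    rw [hWeq t ht.le, hWg_def]
    have : 0 < Real.sinh (a * t) := Real.sinh_pos_iff.2 (mul_pos ha ht)
    positivity
  rw [div_le_div_iff₀ hWt ha, hintW, one_mul, hWeq t ht.le]
  calc (∫ s in (0:ℝ)..t, Wg s) * a ≤ Wg t / a * a :=
        mul_le_mul_of_nonneg_right hineq ha.le
    _ = Wg t := div_mul_cancel₀ _ ha.ne'
end

section
/- Let b < 0 and h : [0,∞) → ℝ continuous with |h(r)| ≤ (1/2)(√(-b)·coth(√(-b)·r) − √(-b)) for all r > 0, and let W(t) = sinh(√(-b)t)/(√(-b)·e^{2∫₀ᵗ h(s)ds}). Then W(t) → ∞ as t → ∞, q_W(t) = (∫₀ᵗ W)/W(t) → 1/√(-b) as t → ∞, and q_W(t) → 0 as t → 0⁺. -/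
open Real Filter MeasureTheory Set intervalIntegral


lemma aux_exp_int (c a b : ℝ) (hc : c ≠ 0) :
    ∫ s in a..b, Real.exp (c * s) = (Real.exp (c * b) - Real.exp (c * a)) / c := by
  have H : ∀ x ∈ Set.uIcc a b, HasDerivAt (fun u => Real.exp (c * u) / c) (Real.exp (c * x)) x := by
    intro x _
    have h1 : HasDerivAt (fun u : ℝ => c * u) c x := by simpa using (hasDerivAt_id x).const_mul c
    have h2 := (h1.exp).div_const c
    refine h2.congr_deriv ?_
    exact (mul_div_cancel_right₀ _ hc)
  rw [intervalIntegral.integral_eq_sub_of_hasDerivAt H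
    ((Real.continuous_exp.comp (continuous_const.mul continuous_id)).continuousOn.intervalIntegrable)]
  ring

lemma aux_J (c t : ℝ) (hc : 0 < c) :
    ∫ s in (0:ℝ)..t, Real.exp (c*s) * (1 - Real.exp (-(2*c*s)))^2
      = (Real.exp (c*t) + 2*Real.exp (-(c*t)) - Real.exp (-(3*c*t))/3 - 8/3) / c := by
  have key : ∀ s : ℝ, Real.exp (c*s) * (1 - Real.exp (-(2*c*s)))^2
      = Real.exp (c*s) - 2*Real.exp (-(c*s)) + Real.exp (-(3*c*s)) := by
    intro s
    have e1 : Real.exp (c*s) * Real.exp (-(2*c*s)) = Real.exp (-(c*s)) := by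
      rw [← Real.exp_add]; ring_nf
    have e2 : Real.exp (c*s) * (Real.exp (-(2*c*s)) * Real.exp (-(2*c*s))) = Real.exp (-(3*c*s)) := by
      rw [← Real.exp_add, ← Real.exp_add]; ring_nf
    nlinarith [e1, e2]
  have c1 : Continuous fun s : ℝ => Real.exp (c*s) := by fun_prop
  have c2 : Continuous fun s : ℝ => Real.exp (-(c*s)) := by fun_prop
  have c3 : Continuous fun s : ℝ => Real.exp (-(3*c*s)) := by fun_prop
  have I1 := c1.intervalIntegrable (μ := volume) (0:ℝ) t
  have I2 := c2.intervalIntegrable (μ := volume) (0:ℝ) t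
  have I3 := c3.intervalIntegrable (μ := volume) (0:ℝ) t
  have i1 := aux_exp_int c 0 t hc.ne'
  have i2 := aux_exp_int (-c) 0 t (by linarith)
  have i3 := aux_exp_int (-(3*c)) 0 t (by nlinarith)
  simp only [neg_mul, mul_assoc] at i2
  simp only [neg_mul, ← mul_assoc] at i3
  rw [intervalIntegral.integral_congr (fun s _ => key s),
    intervalIntegral.integral_add (I1.sub (I2.const_mul 2)) I3,
    intervalIntegral.integral_sub I1 (I2.const_mul 2),
    intervalIntegral.integral_const_mul, i1, i2, i3]
  simp only [mul_zero, neg_zero, Real.exp_zero]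
  field_simp
  ring

lemma aux_log_int (c : ℝ) (hc : 0 < c) (s t : ℝ) (hs : 0 < s) (hst : s ≤ t) :
    ∫ u in s..t, (1/2) * (c * (Real.cosh (c*u) / Real.sinh (c*u)) - c)
      = (1/2) * (Real.log (1 - Real.exp (-(2*c*t))) - Real.log (1 - Real.exp (-(2*c*s)))) := by
  have hApos : ∀ x : ℝ, 0 < x → 0 < 1 - Real.exp (-(2*c*x)) := by
    intro x hx
    have : Real.exp (-(2*c*x)) < 1 := Real.exp_lt_one_iff.mpr (by nlinarith)
    linarith
  have H : ∀ x ∈ Set.uIcc s t, HasDerivAt (fun u => (1/2) * Real.log (1 - Real.exp (-(2*c*u))))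
      ((1/2) * (c * (Real.cosh (c*x) / Real.sinh (c*x)) - c)) x := by
    intro x hx
    rw [Set.uIcc_of_le hst] at hx
    have hx0 : 0 < x := lt_of_lt_of_le hs hx.1
    have h1 : HasDerivAt (fun u : ℝ => -(2*c*u)) (-(2*c)) x := by
      simpa using ((hasDerivAt_id x).const_mul (2*c)).fun_neg
    have h2 : HasDerivAt (fun u => 1 - Real.exp (-(2*c*u))) (Real.exp (-(2*c*x)) * (2*c)) x := by
      have := (h1.exp).const_sub 1
      exact this.congr_deriv (by ring)
    have h3 := (h2.log (hApos x hx0).ne').const_mul (1/2)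
    refine h3.congr_deriv ?_
    have e1 : Real.exp (-(c*x)) = Real.exp (c*x) * Real.exp (-(2*c*x)) := by
      rw [← Real.exp_add]; ring_nf
    have hAne : 1 - Real.exp (-(2*c*x)) ≠ 0 := (hApos x hx0).ne'
    have hS : (0:ℝ) < Real.exp (c*x) - Real.exp (c*x) * Real.exp (-(2*c*x)) := by
      have h := hApos x hx0
      nlinarith [Real.exp_pos (c*x)]
    rw [Real.cosh_eq, Real.sinh_eq, e1]
    field_simp [hS.ne']
    ring
  have hcont : ContinuousOn (fun u => (1/2) * (c * (Real.cosh (c*u) / Real.sinh (c*u)) - c))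
      (Set.uIcc s t) := by
    rw [Set.uIcc_of_le hst]
    apply ContinuousOn.mul continuousOn_const
    apply ContinuousOn.sub _ continuousOn_const
    apply ContinuousOn.mul continuousOn_const
    apply ContinuousOn.div
    · exact (Real.continuous_cosh.comp (continuous_const.mul continuous_id)).continuousOn
    · exact (Real.continuous_sinh.comp (continuous_const.mul continuous_id)).continuousOn
    · intro x hx
      exact (Real.sinh_pos_iff.mpr (by nlinarith [hx.1])).ne'
  rw [intervalIntegral.integral_eq_sub_of_hasDerivAt H (hcont.intervalIntegrable)]
  ring


theorem stmt_4 (b : ℝ) (hb : b < 0) (h : ℝ → ℝ)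
    (hcont : ContinuousOn h (Set.Ici 0))
    (hbal : ∀ r > 0, |h r| ≤ (1 / 2) *
      (Real.sqrt (-b) * (Real.cosh (Real.sqrt (-b) * r) / Real.sinh (Real.sqrt (-b) * r))
        - Real.sqrt (-b)))
    (W : ℝ → ℝ)
    (hW : ∀ t, W t = Real.sinh (Real.sqrt (-b) * t) /
      (Real.sqrt (-b) * Real.exp (2 * ∫ s in (0:ℝ)..t, h s))) :
    Filter.Tendsto W Filter.atTop Filter.atTop ∧
    Filter.Tendsto (fun t => (∫ s in (0:ℝ)..t, W s) / W t) Filter.atTop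
      (nhds (1 / Real.sqrt (-b))) ∧
    Filter.Tendsto (fun t => (∫ s in (0:ℝ)..t, W s) / W t) (nhdsWithin 0 (Set.Ioi 0))
      (nhds 0) := by
  set c := Real.sqrt (-b) with hcdef
  have hc : 0 < c := Real.sqrt_pos.mpr (by linarith)
  set P : ℝ → ℝ := fun t => ∫ s in (0:ℝ)..t, h s with hPdef
  -- basic facts about A x = 1 - exp(-(2*c*x))
  have hApos : ∀ x : ℝ, 0 < x → 0 < 1 - Real.exp (-(2*c*x)) := by
    intro x hx
    have : Real.exp (-(2*c*x)) < 1 := Real.exp_lt_one_iff.mpr (by nlinarith)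
    linarith
  have hAle : ∀ s t : ℝ, s ≤ t → 1 - Real.exp (-(2*c*s)) ≤ 1 - Real.exp (-(2*c*t)) := by
    intro s t hst
    have : Real.exp (-(2*c*t)) ≤ Real.exp (-(2*c*s)) := Real.exp_le_exp.mpr (by nlinarith)
    linarith
  -- integrability of h
  have hInt : ∀ u v : ℝ, 0 ≤ u → 0 ≤ v → IntervalIntegrable h volume u v := by
    intro u v hu hv
    exact (hcont.mono (fun x hx => (le_min hu hv).trans hx.1)).intervalIntegrable
  -- the key estimate on P
  have hPdiff : ∀ s t : ℝ, 0 < s → s ≤ t →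
      |P t - P s| ≤ (1/2) * (Real.log (1 - Real.exp (-(2*c*t))) - Real.log (1 - Real.exp (-(2*c*s)))) := by
    intro s t hs hst
    have hsplit : P s + (∫ u in s..t, h u) = P t :=
      intervalIntegral.integral_add_adjacent_intervals (hInt 0 s le_rfl hs.le)
        (hInt s t hs.le (hs.le.trans hst))
    have hPts : P t - P s = ∫ u in s..t, h u := by linarith
    rw [hPts]
    have hgcont : ContinuousOn (fun u => (1/2) * (c * (Real.cosh (c*u) / Real.sinh (c*u)) - c))
        (Set.uIcc s t) := by
      rw [Set.uIcc_of_le hst]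
      apply ContinuousOn.mul continuousOn_const
      apply ContinuousOn.sub _ continuousOn_const
      apply ContinuousOn.mul continuousOn_const
      apply ContinuousOn.div
      · exact (Real.continuous_cosh.comp (continuous_const.mul continuous_id)).continuousOn
      · exact (Real.continuous_sinh.comp (continuous_const.mul continuous_id)).continuousOn
      · intro x hx
        exact (Real.sinh_pos_iff.mpr (by nlinarith [hx.1])).ne'
    calc |∫ u in s..t, h u| ≤ ∫ u in s..t, |h u| :=
          intervalIntegral.abs_integral_le_integral_abs hst
      _ ≤ ∫ u in s..t, (1/2) * (c * (Real.cosh (c*u) / Real.sinh (c*u)) - c) := by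
          apply intervalIntegral.integral_mono_on hst
            ((hInt s t hs.le (hs.le.trans hst)).abs) hgcont.intervalIntegrable
          intro u hu
          exact hbal u (lt_of_lt_of_le hs hu.1)
      _ = (1/2) * (Real.log (1 - Real.exp (-(2*c*t))) - Real.log (1 - Real.exp (-(2*c*s)))) :=
          aux_log_int c hc s t hs hst
  -- explicit form of W
  have hW' : ∀ x : ℝ, W x = Real.exp (c*x) * (1 - Real.exp (-(2*c*x))) / (2 * c * Real.exp (2 * P x)) := by
    intro x
    rw [hW x]
    have e1 : Real.exp (-(c*x)) = Real.exp (c*x) * Real.exp (-(2*c*x)) := by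
      rw [← Real.exp_add]; ring_nf
    rw [Real.sinh_eq, e1]
    simp only [hPdef]
    field_simp
  have hWpos : ∀ x : ℝ, 0 < x → 0 < W x := by
    intro x hx
    rw [hW' x]
    have := hApos x hx
    positivity
  have hW0 : W 0 = 0 := by rw [hW 0]; simp
  have hWnonneg : ∀ x : ℝ, 0 ≤ x → 0 ≤ W x := by
    intro x hx
    rcases hx.lt_or_eq with hx' | hx'
    · exact (hWpos x hx').le
    · rw [← hx', hW0]
  -- key pointwise bounds
  have hup : ∀ t : ℝ, 0 < t → ∀ s ∈ Set.Icc (0:ℝ) t, W s ≤ Real.exp (c*(s-t)) * W t := by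
    intro t ht s hsmem
    rcases eq_or_lt_of_le hsmem.1 with rfl | hs
    · rw [hW0]; have := hWpos t ht; positivity
    · have hst := hsmem.2
      have hAs := hApos s hs
      have hAt := hApos t (lt_of_lt_of_le hs hst)
      have hD := hPdiff s t hs hst
      have h1 : Real.exp (2*(P t - P s)) ≤ (1 - Real.exp (-(2*c*t))) / (1 - Real.exp (-(2*c*s))) := by
        rw [← Real.exp_log (div_pos hAt hAs), Real.log_div hAt.ne' hAs.ne']
        exact Real.exp_le_exp.mpr (by linarith [(abs_le.mp hD).2])
      have key : (1 - Real.exp (-(2*c*s))) * Real.exp (2*(P t - P s)) ≤ 1 - Real.exp (-(2*c*t)) := by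
        have := (le_div_iff₀ hAs).mp h1
        linarith
      have hXrel : Real.exp (2 * P t) = Real.exp (2 * P s) * Real.exp (2*(P t - P s)) := by
        rw [← Real.exp_add]; ring_nf
      have eE : Real.exp (c*(s-t)) * Real.exp (c*t) = Real.exp (c*s) := by
        rw [← Real.exp_add]; ring_nf
      rw [hW' s, hW' t, ← mul_div_assoc,
        div_le_div_iff₀ (by positivity) (by positivity)]
      calc Real.exp (c*s) * (1 - Real.exp (-(2*c*s))) * (2 * c * Real.exp (2 * P t))
          = ((1 - Real.exp (-(2*c*s))) * Real.exp (2*(P t - P s))) * (Real.exp (c*s) * (2 * c * Real.exp (2 * P s))) := by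
            rw [hXrel]; ring
        _ ≤ (1 - Real.exp (-(2*c*t))) * (Real.exp (c*s) * (2 * c * Real.exp (2 * P s))) := by
            apply mul_le_mul_of_nonneg_right key (by positivity)
        _ = Real.exp (c*(s-t)) * (Real.exp (c*t) * (1 - Real.exp (-(2*c*t)))) * (2 * c * Real.exp (2 * P s)) := by
            rw [← eE]; ring
  have hlow : ∀ t : ℝ, 0 < t → ∀ s ∈ Set.Icc (0:ℝ) t,
      Real.exp (c*(s-t)) * ((1 - Real.exp (-(2*c*s))) / (1 - Real.exp (-(2*c*t))))^2 * W t ≤ W s := by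
    intro t ht s hsmem
    rcases eq_or_lt_of_le hsmem.1 with rfl | hs
    · simp [hW0]
    · have hst := hsmem.2
      have hAs := hApos s hs
      have hAt := hApos t (lt_of_lt_of_le hs hst)
      have hD := hPdiff s t hs hst
      have h2 : (1 - Real.exp (-(2*c*s))) / (1 - Real.exp (-(2*c*t))) ≤ Real.exp (2*(P t - P s)) := by
        rw [← Real.exp_log (div_pos hAs hAt), Real.log_div hAs.ne' hAt.ne']
        exact Real.exp_le_exp.mpr (by linarith [(abs_le.mp hD).1])
      have key2 : 1 - Real.exp (-(2*c*s)) ≤ (1 - Real.exp (-(2*c*t))) * Real.exp (2*(P t - P s)) := by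
        have := (div_le_iff₀ hAt).mp h2
        linarith
      have hXrel : Real.exp (2 * P t) = Real.exp (2 * P s) * Real.exp (2*(P t - P s)) := by
        rw [← Real.exp_add]; ring_nf
      have eE : Real.exp (c*(s-t)) * Real.exp (c*t) = Real.exp (c*s) := by
        rw [← Real.exp_add]; ring_nf
      rw [hW' s, hW' t]
      have lhs_eq : Real.exp (c*(s-t)) * ((1 - Real.exp (-(2*c*s))) / (1 - Real.exp (-(2*c*t))))^2 *
          (Real.exp (c*t) * (1 - Real.exp (-(2*c*t))) / (2 * c * Real.exp (2 * P t)))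
          = (Real.exp (c*(s-t)) * Real.exp (c*t) * (1 - Real.exp (-(2*c*s)))^2) /
            ((1 - Real.exp (-(2*c*t))) * (2 * c * Real.exp (2 * P t))) := by
        field_simp
      rw [lhs_eq, div_le_div_iff₀ (by positivity) (by positivity), eE]
      calc Real.exp (c*s) * (1 - Real.exp (-(2*c*s)))^2 * (2 * c * Real.exp (2 * P s))
          = ((1 - Real.exp (-(2*c*s))) * ((1 - Real.exp (-(2*c*s))) * (Real.exp (c*s) * (2 * c * Real.exp (2 * P s))))) := by
            ring
        _ ≤ ((1 - Real.exp (-(2*c*t))) * Real.exp (2*(P t - P s))) * ((1 - Real.exp (-(2*c*s))) * (Real.exp (c*s) * (2 * c * Real.exp (2 * P s)))) := by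
            apply mul_le_mul_of_nonneg_right key2 (by positivity)
        _ = Real.exp (c*s) * (1 - Real.exp (-(2*c*s))) * ((1 - Real.exp (-(2*c*t))) * (2 * c * Real.exp (2 * P t))) := by
            rw [hXrel]; ring
  -- integrability of W
  have hWint : ∀ t : ℝ, 0 < t → IntervalIntegrable W volume 0 t := by
    intro t ht
    have hPcont : ContinuousOn P (Set.uIcc (0:ℝ) t) :=
      intervalIntegral.continuousOn_primitive_interval' (hInt 0 t le_rfl ht.le) Set.left_mem_uIcc
    have hco : ContinuousOn (fun x => Real.sinh (c*x) / (c * Real.exp (2 * P x))) (Set.uIcc (0:ℝ) t) := by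
      apply ContinuousOn.div
      · exact (Real.continuous_sinh.comp (continuous_const.mul continuous_id)).continuousOn
      · exact continuousOn_const.mul ((Real.continuous_exp.comp_continuousOn) (continuousOn_const.mul hPcont))
      · intro x _
        positivity
    exact (hco.congr (fun x _ => hW x)).intervalIntegrable
  -- integral upper bound
  have hIup : ∀ t : ℝ, 0 < t → (∫ s in (0:ℝ)..t, W s) ≤ (1 - Real.exp (-(c*t)))/c * W t := by
    intro t ht
    have hcontu : Continuous fun s : ℝ => Real.exp (c*(s-t)) * W t := by fun_prop
    have step1 : (∫ s in (0:ℝ)..t, W s) ≤ ∫ s in (0:ℝ)..t, Real.exp (c*(s-t)) * W t :=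
      intervalIntegral.integral_mono_on ht.le (hWint t ht)
        (hcontu.intervalIntegrable _ _) (hup t ht)
    have congr1 : ∀ s : ℝ, Real.exp (c*(s-t)) * W t
        = Real.exp (c*s) * (Real.exp (-(c*t)) * W t) := by
      intro s
      rw [show Real.exp (c*(s-t)) = Real.exp (c*s) * Real.exp (-(c*t)) by
        rw [← Real.exp_add]; ring_nf]
      ring
    have step2 : (∫ s in (0:ℝ)..t, Real.exp (c*(s-t)) * W t)
        = (Real.exp (c*t) - 1)/c * (Real.exp (-(c*t)) * W t) := by
      rw [intervalIntegral.integral_congr (fun s _ => congr1 s),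
        intervalIntegral.integral_mul_const, aux_exp_int c 0 t hc.ne']
      simp
    have e2 : Real.exp (c*t) * Real.exp (-(c*t)) = 1 := by rw [← Real.exp_add]; simp
    calc (∫ s in (0:ℝ)..t, W s) ≤ _ := step1
      _ = (Real.exp (c*t) - 1)/c * (Real.exp (-(c*t)) * W t) := step2
      _ = (1 - Real.exp (-(c*t)))/c * W t := by
          field_simp
          linear_combination (W t) * e2
  -- integral lower bound
  have hIlow : ∀ t : ℝ, 0 < t →
      Real.exp (-(c*t)) / (1 - Real.exp (-(2*c*t)))^2 *
        ((Real.exp (c*t) + 2*Real.exp (-(c*t)) - Real.exp (-(3*c*t))/3 - 8/3)/c) * W t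
        ≤ ∫ s in (0:ℝ)..t, W s := by
    intro t ht
    have hAt := hApos t ht
    have hcontl : Continuous fun s : ℝ =>
        Real.exp (c*(s-t)) * ((1 - Real.exp (-(2*c*s))) / (1 - Real.exp (-(2*c*t))))^2 * W t := by
      fun_prop
    have step1 : (∫ s in (0:ℝ)..t,
        Real.exp (c*(s-t)) * ((1 - Real.exp (-(2*c*s))) / (1 - Real.exp (-(2*c*t))))^2 * W t)
        ≤ ∫ s in (0:ℝ)..t, W s :=
      intervalIntegral.integral_mono_on ht.le (hcontl.intervalIntegrable _ _)
        (hWint t ht) (hlow t ht)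
    refine le_trans (le_of_eq ?_) step1
    have congr1 : ∀ s : ℝ,
        Real.exp (c*(s-t)) * ((1 - Real.exp (-(2*c*s))) / (1 - Real.exp (-(2*c*t))))^2 * W t
        = Real.exp (c*s) * (1 - Real.exp (-(2*c*s)))^2 *
          (Real.exp (-(c*t)) * W t / (1 - Real.exp (-(2*c*t)))^2) := by
      intro s
      rw [show Real.exp (c*(s-t)) = Real.exp (c*s) * Real.exp (-(c*t)) by
        rw [← Real.exp_add]; ring_nf]
      field_simp
    rw [intervalIntegral.integral_congr (fun s _ => congr1 s),
      intervalIntegral.integral_mul_const, aux_J c t hc]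
    ring
  -- quotient bounds
  have hqup : ∀ t : ℝ, 0 < t → (∫ s in (0:ℝ)..t, W s) / W t ≤ (1 - Real.exp (-(c*t)))/c := by
    intro t ht
    rw [div_le_iff₀ (hWpos t ht)]
    exact hIup t ht
  have hqlow : ∀ t : ℝ, 0 < t →
      Real.exp (-(c*t)) / (1 - Real.exp (-(2*c*t)))^2 *
        ((Real.exp (c*t) + 2*Real.exp (-(c*t)) - Real.exp (-(3*c*t))/3 - 8/3)/c)
        ≤ (∫ s in (0:ℝ)..t, W s) / W t := by
    intro t ht
    rw [le_div_iff₀ (hWpos t ht)]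
    exact hIlow t ht
  have hqnn : ∀ t : ℝ, 0 < t → 0 ≤ (∫ s in (0:ℝ)..t, W s) / W t := by
    intro t ht
    apply div_nonneg _ (hWpos t ht).le
    exact intervalIntegral.integral_nonneg ht.le (fun u hu => hWnonneg u hu.1)
  -- exponential limits
  have hexp0 : ∀ k : ℝ, 0 < k → Tendsto (fun t : ℝ => Real.exp (-(k*t))) atTop (nhds 0) := by
    intro k hk
    apply Real.tendsto_exp_atBot.comp
    exact tendsto_neg_atTop_atBot.comp (tendsto_id.const_mul_atTop hk)
  have hupTend : Tendsto (fun t : ℝ => (1 - Real.exp (-(c*t)))/c) atTop (nhds (1/c)) := by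
    have := ((hexp0 c hc).const_sub 1).div_const c
    simpa using this
  have hnum : Tendsto (fun t : ℝ =>
      1 + 2*Real.exp (-(2*c*t)) - Real.exp (-(4*c*t))/3 - 8/3*Real.exp (-(c*t))) atTop (nhds 1) := by
    have h2 := hexp0 (2*c) (by positivity)
    have h4 := hexp0 (4*c) (by positivity)
    have h1 := hexp0 c hc
    have := (((h2.const_mul 2).const_add 1).sub (h4.div_const 3)).sub
      (h1.const_mul (8/3))
    simpa using this
  have hden : Tendsto (fun t : ℝ => c * (1 - Real.exp (-(2*c*t)))^2) atTop (nhds c) := by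
    have := (((hexp0 (2*c) (by positivity)).const_sub 1).pow 2).const_mul c
    simpa using this
  have hlowTend : Tendsto (fun t : ℝ =>
      Real.exp (-(c*t)) / (1 - Real.exp (-(2*c*t)))^2 *
        ((Real.exp (c*t) + 2*Real.exp (-(c*t)) - Real.exp (-(3*c*t))/3 - 8/3)/c))
      atTop (nhds (1/c)) := by
    have base := hnum.div hden hc.ne'
    apply base.congr'
    filter_upwards [eventually_gt_atTop 0] with t ht
    have hAt := hApos t ht
    have hu : Real.exp (-(c*t)) ≠ 0 := Real.exp_ne_zero _
    have e2 : Real.exp (-(2*c*t)) = Real.exp (-(c*t))^2 := by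
      rw [pow_two, ← Real.exp_add]; ring_nf
    have e3 : Real.exp (-(3*c*t)) = Real.exp (-(c*t))^3 := by
      rw [pow_succ, pow_two, ← Real.exp_add, ← Real.exp_add]; ring_nf
    have e4 : Real.exp (-(4*c*t)) = Real.exp (-(c*t))^4 := by
      rw [show (4:ℕ) = 3+1 from rfl, pow_succ, ← e3, ← Real.exp_add]; ring_nf
    have eE : Real.exp (c*t) = (Real.exp (-(c*t)))⁻¹ := by
      rw [← Real.exp_neg]; ring_nf
    have hAne : 1 - Real.exp (-(c*t))^2 ≠ 0 := by rw [← e2]; exact hAt.ne'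
    simp only [Pi.div_apply]
    rw [e2, e3, e4, eE]
    field_simp
  -- conclusion
  refine ⟨?_, ?_, ?_⟩
  · -- W tends to infinity
    have hW1 : 0 < W 1 := hWpos 1 one_pos
    have hbase : Tendsto (fun t : ℝ => Real.exp (c*(t-1)) * W 1) atTop atTop := by
      apply Tendsto.atTop_mul_const hW1
      apply Real.tendsto_exp_atTop.comp
      apply Tendsto.const_mul_atTop hc
      exact tendsto_atTop_add_const_right _ (-1) tendsto_id
    apply tendsto_atTop_mono' atTop _ hbase
    filter_upwards [eventually_ge_atTop 1] with t ht
    have h1t : (1:ℝ) ∈ Set.Icc (0:ℝ) t := ⟨by norm_num, ht⟩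
    have hu1 := hup t (by linarith) 1 h1t
    have ee : Real.exp (c*(t-1)) * Real.exp (c*(1-t)) = 1 := by
      rw [← Real.exp_add, show c*(t-1)+c*(1-t) = 0 by ring, Real.exp_zero]
    have ee' : Real.exp (c*(t-1)) * (Real.exp (c*(1-t)) * W t) = W t := by
      rw [← mul_assoc, ee, one_mul]
    linarith [mul_le_mul_of_nonneg_left hu1 (Real.exp_pos (c*(t-1))).le, ee']
  · -- quotient tends to 1/c
    apply tendsto_of_tendsto_of_tendsto_of_le_of_le' hlowTend hupTend
    · filter_upwards [eventually_gt_atTop 0] with t ht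
      exact hqlow t ht
    · filter_upwards [eventually_gt_atTop 0] with t ht
      exact hqup t ht
  · -- quotient tends to 0 at 0+
    have hup0 : Tendsto (fun t : ℝ => (1 - Real.exp (-(c*t)))/c)
        (nhdsWithin 0 (Set.Ioi 0)) (nhds 0) := by
      have hcont2 : Continuous fun t : ℝ => (1 - Real.exp (-(c*t)))/c := by fun_prop
      have := (hcont2.tendsto 0).mono_left (nhdsWithin_le_nhds (s := Set.Ioi 0))
      simpa using this
    apply tendsto_of_tendsto_of_tendsto_of_le_of_le' tendsto_const_nhds hup0
    · filter_upwards [self_mem_nhdsWithin] with t ht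
      exact hqnn t ht
    · filter_upwards [self_mem_nhdsWithin] with t ht
      exact hqup t ht
end

section
/- Let b < 0 and h : [0,∞) → ℝ continuous with |h(r)| ≤ (1/2)(√(-b)·coth(√(-b)·r) − √(-b)) for all r > 0, and let q_W be the isoperimetric quotient of the associated warping function W. Then there exists t₀ ≥ 0 such that for all r ≥ t₀, q_W(r)·(√(-b)·coth(√(-b)·r) − h(r)) ≥ 1/2. -/
open intervalIntegral MeasureTheory

set_option maxHeartbeats 2000000 in
theorem stmt_5 (b : ℝ) (hb : b < 0) (h : ℝ → ℝ)
    (hcont : ContinuousOn h (Set.Ici 0))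
    (hbal : ∀ r > 0, |h r| ≤ (1 / 2) *
      (Real.sqrt (-b) * (Real.cosh (Real.sqrt (-b) * r) / Real.sinh (Real.sqrt (-b) * r))
        - Real.sqrt (-b)))
    (W : ℝ → ℝ)
    (hW : ∀ t, W t = Real.sinh (Real.sqrt (-b) * t) /
      (Real.sqrt (-b) * Real.exp (2 * ∫ s in (0:ℝ)..t, h s))) :
    ∃ t₀ ≥ (0:ℝ), ∀ r ≥ t₀,
      ((∫ s in (0:ℝ)..r, W s) / W r) *
        (Real.sqrt (-b) * (Real.cosh (Real.sqrt (-b) * r) / Real.sinh (Real.sqrt (-b) * r))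
          - h r) ≥ 1 / 2 := by
  set a := Real.sqrt (-b) with ha_def
  have ha : 0 < a := Real.sqrt_pos.mpr (by linarith)
  have hint : ∀ s t : ℝ, 0 ≤ s → 0 ≤ t → IntervalIntegrable h volume s t := by
    intro s t hs ht
    apply ContinuousOn.intervalIntegrable
    apply hcont.mono
    intro x hx
    exact le_trans (le_inf hs ht) hx.1
  refine ⟨13 / a, by positivity, ?_⟩
  intro r hr
  have hr0 : 0 < r := lt_of_lt_of_le (by positivity) hr
  have hx : 13 ≤ a * r := by
    rw [ge_iff_le, div_le_iff₀ ha] at hr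
    nlinarith
  have hsr : 0 < Real.sinh (a * r) := Real.sinh_pos_iff.mpr (by positivity)
  have hWr : 0 < W r := by
    rw [hW r]
    positivity
  -- the curvature factor is at least a
  have hcoth : 1 ≤ Real.cosh (a * r) / Real.sinh (a * r) := by
    rw [le_div_iff₀ hsr, one_mul]
    nlinarith [Real.cosh_sub_sinh (a * r), Real.exp_pos (-(a * r))]
  have hbalr := hbal r hr0
  have hF : a ≤ a * (Real.cosh (a * r) / Real.sinh (a * r)) - h r := by
    have h1 := (abs_le.mp hbalr).2
    nlinarith [mul_le_mul_of_nonneg_left hcoth ha.le]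
  -- pointwise lower bound for W
  set c : ℝ := W r * Real.exp (a * r) / (4 * (Real.sinh (a * r))^2) with hc_def
  have hcpos : 0 < c := by positivity
  have hkey : ∀ s ∈ Set.Icc (0:ℝ) r, c * (Real.exp (a * s) - 2) ≤ W s := by
    rintro s ⟨hs0, hsle⟩
    rcases eq_or_lt_of_le hs0 with rfl | hs0'
    · simp only [hW 0, mul_zero, Real.sinh_zero, zero_div, Real.exp_zero]
      nlinarith
    have hss : 0 < Real.sinh (a * s) := Real.sinh_pos_iff.mpr (by positivity)
    have hpos : ∀ u ∈ Set.uIcc s r, 0 < Real.sinh (a * u) := by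
      intro u hu
      rw [Set.uIcc_of_le hsle] at hu
      exact Real.sinh_pos_iff.mpr (by nlinarith [hu.1])
    -- FTC computation of the comparison integral
    have hcalc : ∫ u in s..r, (a * (Real.cosh (a*u) / Real.sinh (a*u)) - a)
        = (Real.log (Real.sinh (a*r)) - a*r) - (Real.log (Real.sinh (a*s)) - a*s) := by
      have hderiv : ∀ u ∈ Set.uIcc s r,
          HasDerivAt (fun u => Real.log (Real.sinh (a*u)) - a*u)
            (a * (Real.cosh (a*u) / Real.sinh (a*u)) - a) u := by
        intro u hu
        have h1 : HasDerivAt (fun u => Real.sinh (a*u)) (Real.cosh (a*u) * a) u := by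
          simpa [Function.comp_def] using (Real.hasDerivAt_sinh (a*u)).comp u ((hasDerivAt_id u).const_mul a)
        have h2 : HasDerivAt (fun u => Real.log (Real.sinh (a*u)))
            ((Real.sinh (a*u))⁻¹ * (Real.cosh (a*u) * a)) u :=
          by have := (Real.hasDerivAt_log (hpos u hu).ne').comp u h1; exact this
        have h3 := h2.sub ((hasDerivAt_id u).const_mul a)
        exact h3.congr_deriv (by ring)
      have hcont' : IntervalIntegrable (fun u => a * (Real.cosh (a*u) / Real.sinh (a*u)) - a)
          volume s r := by
        apply ContinuousOn.intervalIntegrable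
        apply ContinuousOn.sub _ continuousOn_const
        apply ContinuousOn.mul continuousOn_const
        apply ContinuousOn.div (by fun_prop) (by fun_prop)
        intro u hu
        exact (hpos u hu).ne'
      exact intervalIntegral.integral_eq_sub_of_hasDerivAt hderiv hcont'
    -- bound on ∫ s..r h
    set I : ℝ := ∫ u in s..r, h u with hI_def
    have habs : |I| ≤ (1/2) * ((Real.log (Real.sinh (a*r)) - a*r)
        - (Real.log (Real.sinh (a*s)) - a*s)) := by
      have h1 : |I| ≤ ∫ u in s..r, |h u| :=
        intervalIntegral.abs_integral_le_integral_abs hsle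
      have h2 : ∫ u in s..r, |h u|
          ≤ ∫ u in s..r, (1/2) * (a * (Real.cosh (a*u) / Real.sinh (a*u)) - a) := by
        apply intervalIntegral.integral_mono_on hsle ((hint s r hs0 hr0.le).abs)
        · apply ContinuousOn.intervalIntegrable
          apply ContinuousOn.mul continuousOn_const
          apply ContinuousOn.sub _ continuousOn_const
          apply ContinuousOn.mul continuousOn_const
          apply ContinuousOn.div (by fun_prop) (by fun_prop)
          intro u hu
          exact (hpos u hu).ne'
        · intro u hu
          exact hbal u (by nlinarith [hu.1])
      rw [intervalIntegral.integral_const_mul, hcalc] at h2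
      linarith
    -- relate W s to W r
    have hHadd : (∫ u in (0:ℝ)..r, h u) = (∫ u in (0:ℝ)..s, h u) + I := by
      rw [hI_def]
      exact (intervalIntegral.integral_add_adjacent_intervals
        (hint 0 s le_rfl hs0) (hint s r hs0 hr0.le)).symm
    have hWs : W s = W r * (Real.sinh (a*s) / Real.sinh (a*r)) * Real.exp (2*I) := by
      rw [hW s, hW r, hHadd, mul_add, Real.exp_add]
      field_simp
    have e2I : Real.sinh (a*s) / Real.exp (a*s) * (Real.exp (a*r) / Real.sinh (a*r))
        ≤ Real.exp (2*I) := by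
      have h1 : (Real.log (Real.sinh (a*s)) - a*s) - (Real.log (Real.sinh (a*r)) - a*r)
          ≤ 2*I := by
        have := (abs_le.mp habs).1
        linarith
      calc Real.sinh (a*s) / Real.exp (a*s) * (Real.exp (a*r) / Real.sinh (a*r))
          = Real.exp ((Real.log (Real.sinh (a*s)) - a*s)
              - (Real.log (Real.sinh (a*r)) - a*r)) := by
            rw [Real.exp_sub, Real.exp_sub, Real.exp_sub,
              Real.exp_log hss, Real.exp_log hsr]
            field_simp
        _ ≤ Real.exp (2*I) := Real.exp_le_exp.mpr h1
    have hfac : 0 ≤ W r * (Real.sinh (a*s) / Real.sinh (a*r)) := by positivity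
    have h4 : W r * (Real.sinh (a*s) / Real.sinh (a*r))
          * (Real.sinh (a*s) / Real.exp (a*s) * (Real.exp (a*r) / Real.sinh (a*r)))
        ≤ W s := by
      rw [hWs]
      exact mul_le_mul_of_nonneg_left e2I hfac
    -- algebraic lower bound: sinh² (as) / exp(as) ≥ (exp(as) - 2)/4
    have hsq : (Real.exp (a*s) - 2)/4 ≤ (Real.sinh (a*s))^2 / Real.exp (a*s) := by
      have hp := Real.exp_pos (a*s)
      rw [div_le_div_iff₀ (by norm_num) hp, Real.sinh_eq]
      have hpq : Real.exp (a*s) * Real.exp (-(a*s)) = 1 := by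
        rw [← Real.exp_add]; simp
      have hp1 : 1 ≤ Real.exp (a*s) := Real.one_le_exp (by positivity)
      nlinarith [Real.exp_pos (-(a*s)), sq_nonneg (Real.exp (-(a*s)))]
    calc c * (Real.exp (a*s) - 2)
        = (W r * Real.exp (a*r) / (Real.sinh (a*r))^2) * ((Real.exp (a*s) - 2)/4) := by
          rw [hc_def]; ring
      _ ≤ (W r * Real.exp (a*r) / (Real.sinh (a*r))^2)
            * ((Real.sinh (a*s))^2 / Real.exp (a*s)) :=
          mul_le_mul_of_nonneg_left hsq (by positivity)
      _ = W r * (Real.sinh (a*s) / Real.sinh (a*r))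
            * (Real.sinh (a*s) / Real.exp (a*s) * (Real.exp (a*r) / Real.sinh (a*r))) := by
          field_simp
      _ ≤ W s := h4
  -- integrate the pointwise bound
  have hWint : IntervalIntegrable W volume 0 r := by
    apply ContinuousOn.intervalIntegrable
    have hHcont : ContinuousOn (fun t => ∫ u in (0:ℝ)..t, h u) (Set.uIcc 0 r) :=
      intervalIntegral.continuousOn_primitive_interval' (hint 0 r le_rfl hr0.le)
        Set.left_mem_uIcc
    apply ContinuousOn.congr
      (f := fun t => Real.sinh (a*t) / (a * Real.exp (2 * ∫ u in (0:ℝ)..t, h u)))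
    · apply ContinuousOn.div (by fun_prop)
      · exact continuousOn_const.mul (Real.continuous_exp.comp_continuousOn
          (continuousOn_const.mul hHcont))
      · intro t _
        positivity
    · intro t _
      exact hW t
  have hglow : c * ((Real.exp (a*r) - 1)/a - 2*r) ≤ ∫ s in (0:ℝ)..r, W s := by
    have h1 : ∫ s in (0:ℝ)..r, c * (Real.exp (a*s) - 2) ≤ ∫ s in (0:ℝ)..r, W s := by
      apply intervalIntegral.integral_mono_on hr0.le _ hWint hkey
      apply ContinuousOn.intervalIntegrable (by fun_prop)
    have h2 : ∫ s in (0:ℝ)..r, c * (Real.exp (a*s) - 2)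
        = c * ((Real.exp (a*r) - 1)/a - 2*r) := by
      have e3 : ∫ s in (0:ℝ)..r, Real.exp (a*s) = a⁻¹ * (Real.exp (a*r) - 1) := by
        rw [intervalIntegral.integral_comp_mul_left Real.exp ha.ne']
        simp [integral_exp, smul_eq_mul]
      rw [intervalIntegral.integral_const_mul,
        intervalIntegral.integral_sub (ContinuousOn.intervalIntegrable (by fun_prop))
          intervalIntegrable_const, e3, intervalIntegral.integral_const]
      simp only [smul_eq_mul, sub_zero]
      ring
    rw [h2] at h1
    exact h1
  -- conclude
  have hexp2 : (1 + (a*r)/2)^2 ≤ Real.exp (a*r) := by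
    have h1 := Real.add_one_le_exp ((a*r)/2)
    have h2 : Real.exp ((a*r)/2) ^ 2 = Real.exp (a*r) := by
      rw [sq, ← Real.exp_add, add_halves]
    nlinarith [Real.exp_pos ((a*r)/2), hx]
  have hp24 : 2 + 4*(a*r) ≤ Real.exp (a*r) := by nlinarith
  have hQ : 1 / (2*a) ≤ (∫ s in (0:ℝ)..r, W s) / W r := by
    have h1 : c * ((Real.exp (a*r) - 1)/a - 2*r) / W r ≤ (∫ s in (0:ℝ)..r, W s) / W r := by
      gcongr
    have h2 : c * ((Real.exp (a*r) - 1)/a - 2*r) / W r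
        = Real.exp (a*r) * (Real.exp (a*r) - 1 - 2*(a*r))
            / (a * (4 * (Real.sinh (a*r))^2)) := by
      rw [hc_def]
      field_simp
    have hsinh_le : 2 * Real.sinh (a*r) ≤ Real.exp (a*r) := by
      rw [Real.sinh_eq]
      nlinarith [Real.exp_pos (-(a*r))]
    have hs2p : 4*(Real.sinh (a*r))^2 ≤ (Real.exp (a*r))^2 := by
      nlinarith
    have hN : (Real.exp (a*r))^2 ≤ 2*(Real.exp (a*r)*(Real.exp (a*r) - 1 - 2*(a*r))) := by
      nlinarith [Real.exp_pos (a*r)]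
    have h3 : 1 / (2*a)
        ≤ Real.exp (a*r) * (Real.exp (a*r) - 1 - 2*(a*r))
            / (a * (4 * (Real.sinh (a*r))^2)) := by
      rw [div_le_div_iff₀ (by positivity) (by positivity)]
      have h5 : 4*(Real.sinh (a*r))^2
          ≤ 2*(Real.exp (a*r)*(Real.exp (a*r) - 1 - 2*(a*r))) := hs2p.trans hN
      nlinarith [mul_le_mul_of_nonneg_left h5 ha.le]
    rw [h2] at h1
    exact h3.trans h1
  have hfinal := mul_le_mul hQ hF ha.le (le_trans (by positivity) hQ)
  have heq : 1 / (2*a) * a = 1/2 := by field_simp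
  rw [ge_iff_le, ← heq]
  exact hfinal
end

section
/- Let v : [0,∞) → [0,∞) be continuously differentiable with v(0) = 0, b < 0, t₀ ≥ 0, v₀ = v(t₀), and 0 ≤ C ≤ 1, and suppose (cosh(√(-b)t) − C)·v'(t) ≥ (v(t) − v₀)·√(-b)·sinh(√(-b)t) for all t ≥ 0. Then for all t ≥ 0, ∫₀ᵗ cosh(√(-b)s)·v'(s) ds ≥ ((cosh(√(-b)t) + C)/2)·v(t) − (v₀/2)·(cosh(√(-b)t) − 1). -/
theorem stmt_12 (b : ℝ) (hb : b < 0) (v : ℝ → ℝ) (hv : ContDiff ℝ 1 v)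
    (hvnonneg : ∀ t ≥ (0:ℝ), 0 ≤ v t) (hv0 : v 0 = 0)
    (t₀ : ℝ) (ht₀ : 0 ≤ t₀) (C : ℝ) (hC0 : 0 ≤ C) (hC1 : C ≤ 1)
    (hineq : ∀ t ≥ (0:ℝ),
      (Real.cosh (Real.sqrt (-b) * t) - C) * deriv v t ≥
        (v t - v t₀) * Real.sqrt (-b) * Real.sinh (Real.sqrt (-b) * t)) :
    ∀ t ≥ (0:ℝ),
      (∫ s in (0:ℝ)..t, Real.cosh (Real.sqrt (-b) * s) * deriv v s) ≥
        ((Real.cosh (Real.sqrt (-b) * t) + C) / 2) * v t -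
          (v t₀ / 2) * (Real.cosh (Real.sqrt (-b) * t) - 1) := by
  intro t ht
  set κ := Real.sqrt (-b) with hκ
  have hvdiff : Differentiable ℝ v := hv.differentiable one_ne_zero
  have hvc' : Continuous (deriv v) := hv.continuous_deriv le_rfl
  have hcosh : ∀ s : ℝ, HasDerivAt (fun s => Real.cosh (κ * s)) (κ * Real.sinh (κ * s)) s := by
    intro s
    have h1 : HasDerivAt (fun s : ℝ => κ * s) κ s := by
      simpa using (hasDerivAt_id s).const_mul κ
    rw [show κ * Real.sinh (κ * s) = Real.sinh (κ * s) * κ from mul_comm _ _]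
    simpa [Function.comp_def] using (Real.hasDerivAt_cosh (κ * s)).comp s h1
  have hccont : Continuous fun s => Real.cosh (κ * s) := by continuity
  have hscont : Continuous fun s => κ * Real.sinh (κ * s) := by continuity
  have hibp : (∫ s in (0:ℝ)..t, Real.cosh (κ * s) * deriv v s)
      = Real.cosh (κ * t) * v t - Real.cosh (κ * 0) * v 0
        - ∫ s in (0:ℝ)..t, (κ * Real.sinh (κ * s)) * v s :=
    intervalIntegral.integral_mul_deriv_eq_deriv_mul
      (fun x _ => hcosh x) (fun x _ => (hvdiff x).hasDerivAt)
      (hscont.intervalIntegrable 0 t) (hvc'.intervalIntegrable 0 t)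
  have hmono : (∫ s in (0:ℝ)..t, (κ * Real.sinh (κ * s)) * v s)
      ≤ ∫ s in (0:ℝ)..t,
          ((Real.cosh (κ * s) - C) * deriv v s + (κ * Real.sinh (κ * s)) * v t₀) := by
    apply intervalIntegral.integral_mono_on ht
    · exact (hscont.mul hvdiff.continuous).intervalIntegrable 0 t
    · exact (((hccont.sub continuous_const).mul hvc').add
        (hscont.mul continuous_const)).intervalIntegrable 0 t
    · intro s hs
      have h := hineq s hs.1
      nlinarith [h]
  have hA : (∫ s in (0:ℝ)..t, deriv v s) = v t - v 0 :=
    intervalIntegral.integral_deriv_eq_sub (fun x _ => hvdiff x)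
      (hvc'.intervalIntegrable 0 t)
  have hB : (∫ s in (0:ℝ)..t, κ * Real.sinh (κ * s))
      = Real.cosh (κ * t) - Real.cosh (κ * 0) :=
    intervalIntegral.integral_eq_sub_of_hasDerivAt (fun x _ => hcosh x)
      (hscont.intervalIntegrable 0 t)
  have hsplit : (∫ s in (0:ℝ)..t,
        ((Real.cosh (κ * s) - C) * deriv v s + (κ * Real.sinh (κ * s)) * v t₀))
      = (∫ s in (0:ℝ)..t, Real.cosh (κ * s) * deriv v s)
        - C * (∫ s in (0:ℝ)..t, deriv v s)
        + v t₀ * (∫ s in (0:ℝ)..t, κ * Real.sinh (κ * s)) := by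
    rw [intervalIntegral.integral_add (f := fun s => (Real.cosh (κ * s) - C) * deriv v s)
      (g := fun s => (κ * Real.sinh (κ * s)) * v t₀) (((hccont.sub continuous_const).mul hvc').intervalIntegrable 0 t)
      ((hscont.mul continuous_const).intervalIntegrable 0 t)]
    have : (∫ s in (0:ℝ)..t, (Real.cosh (κ * s) - C) * deriv v s)
        = (∫ s in (0:ℝ)..t, Real.cosh (κ * s) * deriv v s)
          - C * ∫ s in (0:ℝ)..t, deriv v s := by
      rw [← intervalIntegral.integral_const_mul, ← intervalIntegral.integral_sub (f := fun s => Real.cosh (κ * s) * deriv v s)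
        (g := fun s => C * deriv v s)
        ((hccont.mul hvc').intervalIntegrable 0 t)
        ((continuous_const.mul hvc').intervalIntegrable 0 t)]
      congr 1; ext s; ring
    rw [this]
    congr 1
    rw [← intervalIntegral.integral_const_mul]
    congr 1; ext s; ring
  rw [hA, hB] at hsplit
  have hc0 : Real.cosh (κ * 0) = 1 := by simp
  rw [hc0] at hibp hsplit
  rw [hv0] at hibp hsplit
  linarith [hmono, hibp, hsplit]
end

section
/- Let b < 0 and L ≥ 1, h_L(r) = (√(-b)/L)e^{-2√(-b)r}, and let W_L be the associated warping function and q_{W_L} its isoperimetric quotient. Then C_L := inf_{t>0}(cosh(√(-b)t) − q_{W_L}(t)·√(-b)·sinh(√(-b)t)) satisfies 1 − 2/(3L) ≤ C_L ≤ 1; in particular C_L ≥ 1/3 > 0 and C_L → 1 as L → ∞. -/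
/-- The bounding function `h_L(r) = (√(-b)/L)·e^{-2√(-b)r}` of Remark 3.5. -/
noncomputable def hL (b L r : ℝ) : ℝ := Real.sqrt (-b) / L * Real.exp (-2 * Real.sqrt (-b) * r)

/-- The warping function `W_L` of the isoperimetric comparison space associated to `h_L`. -/
noncomputable def WL (b L t : ℝ) : ℝ :=
  Real.sinh (Real.sqrt (-b) * t) /
    (Real.sqrt (-b) * Real.exp (2 * ∫ s in (0:ℝ)..t, hL b L s))

/-- The isoperimetric quotient `q_{W_L}`. -/
noncomputable def qWL (b L t : ℝ) : ℝ := (∫ s in (0:ℝ)..t, WL b L s) / WL b L t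

/-- The constant `C_L = inf_{t>0} (cosh(√(-b)t) - q_{W_L}(t)·√(-b)·sinh(√(-b)t))`. -/
noncomputable def CL (b L : ℝ) : ℝ :=
  sInf ((fun t => Real.cosh (Real.sqrt (-b) * t) -
    qWL b L t * Real.sqrt (-b) * Real.sinh (Real.sqrt (-b) * t)) '' Set.Ioi 0)

lemma int_hL (b L t : ℝ) (hL0 : L ≠ 0) :
    ∫ s in (0:ℝ)..t, hL b L s = (1 - Real.exp (-2 * Real.sqrt (-b) * t)) / (2 * L) := by
  set a := Real.sqrt (-b) with ha
  have key : ∀ s : ℝ, HasDerivAt (fun s => (1 - Real.exp (-2 * a * s)) / (2 * L)) (hL b L s) s := by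
    intro s
    have h1 : HasDerivAt (fun s : ℝ => -2 * a * s) (-2 * a) s := by
      simpa using (hasDerivAt_id s).const_mul (-2 * a)
    have h2 := h1.exp
    have h3 := ((h2.const_sub 1).div_const (2 * L))
    refine h3.congr_deriv ?_
    unfold hL
    rw [← ha]
    field_simp
  have hcont : Continuous (hL b L) := by
    unfold hL
    fun_prop
  rw [intervalIntegral.integral_eq_sub_of_hasDerivAt (fun s _ => key s)
    (hcont.intervalIntegrable 0 t)]
  simp

lemma WL_eq (b L t : ℝ) (hL0 : L ≠ 0) :
    WL b L t = Real.sinh (Real.sqrt (-b) * t) *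
      Real.exp (-((1 - Real.exp (-2 * Real.sqrt (-b) * t)) / L)) / Real.sqrt (-b) := by
  set a := Real.sqrt (-b)
  rw [WL, int_hL b L t hL0]
  rw [Real.exp_neg]
  have h : 2 * ((1 - Real.exp (-2 * a * t)) / (2 * L)) = (1 - Real.exp (-2 * a * t)) / L := by
    field_simp
  rw [h]
  have := Real.exp_ne_zero ((1 - Real.exp (-2 * a * t)) / L)
  field_simp
  simp only [a]
  ring

-- Core integral bounds
set_option maxHeartbeats 2000000 in
lemma I_bounds (a L t : ℝ) (ha : 0 < a) (hL1 : 1 ≤ L) (ht : 0 < t) :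
    Real.cosh (a*t) - 1 ≤ (∫ s in (0:ℝ)..t, a * Real.sinh (a*s) *
        Real.exp ((1 - Real.exp (-2*a*t))/L - (1 - Real.exp (-2*a*s))/L)) ∧
    (∫ s in (0:ℝ)..t, a * Real.sinh (a*s) *
        Real.exp ((1 - Real.exp (-2*a*t))/L - (1 - Real.exp (-2*a*s))/L))
      ≤ Real.cosh (a*t) - 1 + 2/(3*L) := by
  have hL0 : (0:ℝ) < L := by linarith
  set E : ℝ → ℝ := fun s => (1 - Real.exp (-2*a*s))/L with hE
  -- continuity of the integrand
  have hcont : Continuous (fun s => a * Real.sinh (a*s) * Real.exp (E t - E s)) := by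
    fun_prop
  have hint : IntervalIntegrable (fun s => a * Real.sinh (a*s) * Real.exp (E t - E s))
      MeasureTheory.volume 0 t := hcont.intervalIntegrable 0 t
  -- FTC for cosh
  have hcosh : (∫ s in (0:ℝ)..t, a * Real.sinh (a*s)) = Real.cosh (a*t) - 1 := by
    have key : ∀ s : ℝ, HasDerivAt (fun s => Real.cosh (a*s)) (a * Real.sinh (a*s)) s := by
      intro s
      have h1 : HasDerivAt (fun s : ℝ => a*s) a s := by
        simpa using (hasDerivAt_id s).const_mul a
      simpa [mul_comm] using h1.cosh
    rw [intervalIntegral.integral_eq_sub_of_hasDerivAt (fun s _ => key s)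
      ((by fun_prop : Continuous fun s => a * Real.sinh (a*s)).intervalIntegrable 0 t)]
    simp
  have hEle : ∀ s ∈ Set.Icc (0:ℝ) t, E s ≤ E t := by
    intro s hs
    have : Real.exp (-2*a*t) ≤ Real.exp (-2*a*s) := by
      apply Real.exp_le_exp.mpr; nlinarith [hs.2]
    simp only [hE]
    gcongr
  constructor
  · -- lower bound
    rw [← hcosh]
    apply intervalIntegral.integral_mono_on ht.le
      ((by fun_prop : Continuous fun s => a * Real.sinh (a*s)).intervalIntegrable 0 t) hint
    intro s hs
    have h1 : 0 ≤ a * Real.sinh (a*s) := by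
      have : 0 ≤ Real.sinh (a*s) := by
        rw [← Real.sinh_zero]
        exact Real.sinh_le_sinh.mpr (by nlinarith [hs.1])
      positivity
    have h2 : 1 ≤ Real.exp (E t - E s) := by
      apply Real.one_le_exp
      have := hEle s hs
      linarith
    exact le_mul_of_one_le_right h1 h2
  · -- upper bound
    set X : ℝ → ℝ := fun s => Real.exp (-(a*s)) with hX
    set Φ : ℝ → ℝ := fun s => (Real.cosh (a*s) - 1) * Real.exp (E t - E s)
      - (1/L) * ((X s)^2 - 4*(X s) + 5) * Real.exp (X s) with hPhi
    set g : ℝ → ℝ := fun s =>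
      a * Real.sinh (a*s) * Real.exp (E t - E s)
      - (Real.cosh (a*s) - 1) * (2*a/L * Real.exp (-2*a*s)) * Real.exp (E t - E s)
      + (a/L) * (X s) * (X s - 1)^2 * Real.exp (X s) with hg
    have hderiv : ∀ s : ℝ, HasDerivAt Φ (g s) s := by
      intro s
      have hid : HasDerivAt (fun s : ℝ => a*s) a s := by
        simpa using (hasDerivAt_id s).const_mul a
      have hc : HasDerivAt (fun s => Real.cosh (a*s) - 1) (Real.sinh (a*s) * a) s :=
        hid.cosh.sub_const 1
      have hm2 : HasDerivAt (fun s : ℝ => -2*a*s) (-2*a) s := by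
        simpa using (hasDerivAt_id s).const_mul (-2*a)
      have hEd : HasDerivAt E (2*a/L * Real.exp (-2*a*s)) s := by
        have h := (hm2.exp.const_sub 1).div_const L
        refine h.congr_deriv ?_
        ring
      have hu : HasDerivAt (fun s => Real.exp (E t - E s))
          (Real.exp (E t - E s) * -(2*a/L * Real.exp (-2*a*s))) s := (hEd.const_sub (E t)).exp
      have hXd : HasDerivAt X (X s * (-a)) s := by
        have h : HasDerivAt (fun s : ℝ => -(a*s)) (-a) s := hid.neg
        exact h.exp
      have hpoly : HasDerivAt (fun s => (X s)^2 - 4*(X s) + 5)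
          (2 * X s ^ 1 * (X s * (-a)) - 4 * (X s * (-a))) s :=
        ((hXd.pow 2).sub (hXd.const_mul 4)).add_const 5
      have hfull := (hc.mul hu).sub (((hpoly.mul hXd.exp)).const_mul (1/L))
      refine (hfull.congr_deriv ?_).congr_of_eventuallyEq ?_
      · rw [hg]; ring
      · refine Filter.Eventually.of_forall (fun x => ?_)
        simp only [hPhi, Pi.sub_apply, Pi.mul_apply]; ring
    have hgcont : Continuous g := by rw [hg, hX, hE]; fun_prop
    have hgint : IntervalIntegrable g MeasureTheory.volume 0 t := hgcont.intervalIntegrable 0 t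
    have hFTC : (∫ s in (0:ℝ)..t, g s) = Φ t - Φ 0 :=
      intervalIntegral.integral_eq_sub_of_hasDerivAt (fun s _ => hderiv s) hgint
    have hpt : ∀ s ∈ Set.Icc (0:ℝ) t,
        a * Real.sinh (a*s) * Real.exp (E t - E s) ≤ g s := by
      intro s hs
      have hXs : X s = Real.exp (-(a*s)) := rfl
      have hXpos : 0 < X s := Real.exp_pos _
      have hX1 : X s ≤ 1 := by
        rw [hXs]
        apply Real.exp_le_one_iff.mpr
        nlinarith [hs.1]
      have hX2 : Real.exp (-2*a*s) = (X s)^2 := by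
        rw [hXs, sq, ← Real.exp_add]; ring_nf
      have hmul : Real.exp (a*s) * X s = 1 := by
        rw [hXs, ← Real.exp_add]; simp
      have hid2 : (Real.cosh (a*s) - 1) * (2 * Real.exp (-2*a*s)) = X s * (X s - 1)^2 := by
        rw [Real.cosh_eq, hX2, ← hXs]
        linear_combination (X s) * hmul
      have hexp_le : Real.exp (E t - E s) ≤ Real.exp (X s) := by
        apply Real.exp_le_exp.mpr
        have h1 : E t - E s = (Real.exp (-2*a*s) - Real.exp (-2*a*t))/L := by
          rw [hE]; ring
        have h2 : (Real.exp (-2*a*s) - Real.exp (-2*a*t))/L ≤ Real.exp (-2*a*s) := by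
          rw [div_le_iff₀ hL0]
          nlinarith [Real.exp_pos (-2*a*t), Real.exp_pos (-2*a*s)]
        have h3 : Real.exp (-2*a*s) ≤ X s := by
          rw [hX2]; nlinarith
        linarith
      have h3 : (a/L) * (X s * (X s - 1)^2) * Real.exp (E t - E s)
          ≤ (a/L) * (X s * (X s - 1)^2) * Real.exp (X s) :=
        mul_le_mul_of_nonneg_left hexp_le (by positivity)
      have hBeq : (Real.cosh (a*s) - 1) * (2*a/L * Real.exp (-2*a*s)) * Real.exp (E t - E s)
          = (a/L) * (X s * (X s - 1)^2) * Real.exp (E t - E s) := by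
        linear_combination (a/L) * (Real.exp (E t - E s)) * hid2
      simp only [hg]
      nlinarith [h3, hBeq]
    have hle := intervalIntegral.integral_mono_on ht.le hint hgint hpt
    rw [hFTC] at hle
    -- now bound Φ t - Φ 0
    have hXt : X t = Real.exp (-(a*t)) := rfl
    have hc0 : 0 < X t := Real.exp_pos _
    have hc1 : X t < 1 := by
      rw [hXt]; apply Real.exp_lt_one_iff.mpr; nlinarith
    have hPhidiff : Φ t - Φ 0 = Real.cosh (a*t) - 1
        + (2*Real.exp 1 - ((X t)^2 - 4*(X t) + 5)*Real.exp (X t))/L := by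
      simp only [hPhi]
      have e1 : Real.exp (E t - E t) = 1 := by rw [sub_self, Real.exp_zero]
      have e2 : X 0 = 1 := by rw [hX]; simp
      have e3 : Real.cosh (a*0) = 1 := by norm_num
      rw [e1, e2, e3]
      have e4 : Real.exp (E t - E 0) = Real.exp (E t - E 0) := rfl
      field_simp
      ring
    -- numeric bound
    have hquad : (1 + X t/4)^4 ≤ Real.exp (X t) := by
      have h1 : X t/4 + 1 ≤ Real.exp (X t/4) := Real.add_one_le_exp _
      have h2 : (X t/4 + 1)^4 ≤ Real.exp (X t/4)^4 := by
        apply pow_le_pow_left₀ (by positivity) h1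
      have h3 : Real.exp (X t/4)^4 = Real.exp (X t) := by
        rw [← Real.exp_nat_mul]
        congr 1
        push_cast; ring
      calc (1 + X t/4)^4 = (X t/4 + 1)^4 := by ring
        _ ≤ Real.exp (X t/4)^4 := h2
        _ = Real.exp (X t) := h3
    have hpospoly : (0:ℝ) ≤ (X t)^2 - 4*(X t) + 5 := by nlinarith
    have hpoly5 : (4.8:ℝ) ≤ ((X t)^2 - 4*(X t) + 5) * (1 + X t/4)^4 := by
      have hb : 1 + X t + 3*(X t)^2/8 + (X t)^3/16 ≤ (1 + X t/4)^4 := by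
        nlinarith [pow_nonneg hc0.le 4]
      have hq : (4.8:ℝ) ≤ ((X t)^2 - 4*(X t) + 5) * (1 + X t + 3*(X t)^2/8 + (X t)^3/16) := by
        have hu : (0:ℝ) ≤ 1 - X t := by linarith
        have hcle := hc0.le
        have h0 : (0:ℝ) ≤ (1 - X t)^5 := by positivity
        have h1 : (0:ℝ) ≤ X t * (1 - X t)^4 := by positivity
        have h2 : (0:ℝ) ≤ (X t)^2 * (1 - X t)^3 := by positivity
        have h3 : (0:ℝ) ≤ (X t)^3 * (1 - X t)^2 := by positivity
        have h4 : (0:ℝ) ≤ (X t)^4 * (1 - X t) := by positivity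
        have h5 : (0:ℝ) ≤ (X t)^5 := by positivity
        nlinarith [h0, h1, h2, h3, h4, h5]
      calc (4.8:ℝ) ≤ ((X t)^2 - 4*(X t) + 5) * (1 + X t + 3*(X t)^2/8 + (X t)^3/16) := hq
        _ ≤ ((X t)^2 - 4*(X t) + 5) * (1 + X t/4)^4 := mul_le_mul_of_nonneg_left hb hpospoly
    have hbig : (4.8:ℝ) ≤ ((X t)^2 - 4*(X t) + 5) * Real.exp (X t) := by
      calc (4.8:ℝ) ≤ ((X t)^2 - 4*(X t) + 5) * (1 + X t/4)^4 := hpoly5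
        _ ≤ ((X t)^2 - 4*(X t) + 5) * Real.exp (X t) :=
          mul_le_mul_of_nonneg_left hquad hpospoly
    have hexp1 : Real.exp 1 < 2.7182818286 := Real.exp_one_lt_d9
    have hnum : (2*Real.exp 1 - ((X t)^2 - 4*(X t) + 5)*Real.exp (X t))/L ≤ 2/(3*L) := by
      rw [div_le_div_iff₀ hL0 (by positivity)]
      nlinarith
    have hgoal : (∫ s in (0:ℝ)..t, a * Real.sinh (a*s) *
        Real.exp ((1 - Real.exp (-2*a*t))/L - (1 - Real.exp (-2*a*s))/L))
        = ∫ s in (0:ℝ)..t, a * Real.sinh (a*s) * Real.exp (E t - E s) := rfl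
    rw [hgoal]
    refine hle.trans ?_
    rw [hPhidiff]
    linarith [hnum]

lemma F_bounds (b L t : ℝ) (hb : b < 0) (hL1 : 1 ≤ L) (ht : 0 < t) :
    1 - 2/(3*L) ≤ Real.cosh (Real.sqrt (-b) * t)
        - qWL b L t * Real.sqrt (-b) * Real.sinh (Real.sqrt (-b) * t) ∧
    Real.cosh (Real.sqrt (-b) * t)
        - qWL b L t * Real.sqrt (-b) * Real.sinh (Real.sqrt (-b) * t) ≤ 1 := by
  set a := Real.sqrt (-b) with ha'
  have ha : 0 < a := Real.sqrt_pos.mpr (by linarith)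
  have hL0 : (0:ℝ) < L := by linarith
  have hWeq : ∀ s : ℝ, WL b L s
      = Real.sinh (a*s) * Real.exp (-((1 - Real.exp (-2*a*s))/L)) / a := by
    intro s
    have := WL_eq b L s (ne_of_gt hL0)
    rw [← ha'] at this
    convert this using 4 <;> ring
  have hsinh : 0 < Real.sinh (a*t) := by
    have h := Real.sinh_lt_sinh.mpr (show (0:ℝ) < a*t by positivity)
    simpa using h
  have hq : qWL b L t * a * Real.sinh (a*t)
      = ∫ s in (0:ℝ)..t, a * Real.sinh (a*s) *
          Real.exp ((1 - Real.exp (-2*a*t))/L - (1 - Real.exp (-2*a*s))/L) := by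
    rw [qWL]
    have h1 : (∫ s in (0:ℝ)..t, WL b L s)
        = ∫ s in (0:ℝ)..t, Real.sinh (a*s) * Real.exp (-((1 - Real.exp (-2*a*s))/L)) / a := by
      apply intervalIntegral.integral_congr
      intro s _
      exact hWeq s
    have h2 : (∫ s in (0:ℝ)..t, a * Real.sinh (a*s) *
          Real.exp ((1 - Real.exp (-2*a*t))/L - (1 - Real.exp (-2*a*s))/L))
        = (a^2 * Real.exp ((1 - Real.exp (-2*a*t))/L)) *
          ∫ s in (0:ℝ)..t, Real.sinh (a*s) * Real.exp (-((1 - Real.exp (-2*a*s))/L)) / a := by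
      rw [← intervalIntegral.integral_const_mul]
      apply intervalIntegral.integral_congr
      intro s _
      simp only [Real.exp_sub, Real.exp_neg]
      field_simp
    rw [h1, hWeq t, h2]
    generalize (∫ s in (0:ℝ)..t, Real.sinh (a*s) * Real.exp (-((1 - Real.exp (-2*a*s))/L)) / a) = I
    rw [Real.exp_neg]
    have he1 := Real.exp_ne_zero ((1 - Real.exp (-2*a*t))/L)
    field_simp
  obtain ⟨hlow, hup⟩ := I_bounds a L t ha hL1 ht
  constructor
  · rw [hq]; linarith
  · rw [hq]; linarith

theorem stmt_18 (b : ℝ) (hb : b < 0) :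
    (∀ L ≥ (1:ℝ), 1 - 2 / (3 * L) ≤ CL b L ∧ CL b L ≤ 1 ∧ (1:ℝ) / 3 ≤ CL b L) ∧
    Filter.Tendsto (fun L => CL b L) Filter.atTop (nhds 1) := by
  have key : ∀ L ≥ (1:ℝ), 1 - 2/(3*L) ≤ CL b L ∧ CL b L ≤ 1 := by
    intro L hL1
    set f : ℝ → ℝ := fun t => Real.cosh (Real.sqrt (-b) * t)
      - qWL b L t * Real.sqrt (-b) * Real.sinh (Real.sqrt (-b) * t) with hf
    have hCL : CL b L = sInf (f '' Set.Ioi 0) := rfl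
    have hmem : f 1 ∈ f '' Set.Ioi 0 := ⟨1, Set.mem_Ioi.mpr one_pos, rfl⟩
    have hne : (f '' Set.Ioi 0).Nonempty := ⟨f 1, hmem⟩
    have hbdd : ∀ x ∈ f '' Set.Ioi 0, 1 - 2/(3*L) ≤ x := by
      rintro x ⟨t, ht, rfl⟩
      exact (F_bounds b L t hb hL1 ht).1
    have hbddBelow : BddBelow (f '' Set.Ioi 0) := ⟨1 - 2/(3*L), fun x hx => hbdd x hx⟩
    rw [hCL]
    constructor
    · exact le_csInf hne hbdd
    · exact (csInf_le hbddBelow hmem).trans (F_bounds b L 1 hb hL1 one_pos).2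
  have h23 : ∀ L : ℝ, 1 ≤ L → 2/(3*L) ≤ 2/3 := by
    intro L hL
    rw [div_le_div_iff₀ (by linarith) (by norm_num)]
    linarith
  refine ⟨fun L hL => ⟨(key L hL).1, (key L hL).2, ?_⟩, ?_⟩
  · have h1 := (key L hL).1
    have h2 := h23 L hL
    linarith
  · have hlow : Filter.Tendsto (fun L : ℝ => 1 - 2/(3*L)) Filter.atTop (nhds 1) := by
      have h0 : Filter.Tendsto (fun L : ℝ => 2/(3*L)) Filter.atTop (nhds 0) := by
        apply Filter.Tendsto.div_atTop (tendsto_const_nhds)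
        exact Filter.Tendsto.const_mul_atTop (by norm_num) Filter.tendsto_id
      simpa using tendsto_const_nhds.sub h0
    apply tendsto_of_tendsto_of_tendsto_of_le_of_le' hlow tendsto_const_nhds
    · filter_upwards [Filter.eventually_ge_atTop 1] with L hL using (key L hL).1
    · filter_upwards [Filter.eventually_ge_atTop 1] with L hL using (key L hL).2
end
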